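/- Let (w_ε) be an S-moderate net of Schwartz functions on ℝ^d. Then for all n, m ∈ ℕ there exists N ∈ ℕ such that sup over {ξ ∈ ℝ^d : |ξ| ≥ ε^{−N}} of ⟨ξ⟩^m |w_ε(ξ)| ≤ ε^n for small ε. -/

import Mathlib

open MeasureTheory Set Metric
open scoped RealInnerProductSpace

noncomputable section

/-- Euclidean space `ℝ^d`. -/
abbrev Eu (d : ℕ) : Type := EuclideanSpace ℝ (Fin d)

/-- A property of `ε` holds "for small ε", i.e. on some interval `(0, ε₀]`. -/
def SmallE (P : ℝ → Prop) : Prop :=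
  ∃ ε₀ : ℝ, 0 < ε₀ ∧ ∀ ε : ℝ, 0 < ε → ε ≤ ε₀ → P ε

/-- A net in a normed space is moderate. -/
def ModNet {V : Type*} [NormedAddCommGroup V] (x : ℝ → V) : Prop :=
  ∃ N : ℕ, SmallE fun ε => ‖x ε‖ ≤ ε ^ (-(N : ℝ))

/-- A net in a normed space is negligible. -/
def NegNet {V : Type*} [NormedAddCommGroup V] (x : ℝ → V) : Prop :=
  ∀ m : ℕ, SmallE fun ε => ‖x ε‖ ≤ ε ^ (m : ℝ)

/-- A fast scale infinitesimal net. -/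
def FastInf {V : Type*} [NormedAddCommGroup V] (x : ℝ → V) : Prop :=
  ∃ a : ℝ, 0 < a ∧ SmallE fun ε => ‖x ε‖ ≤ ε ^ a

/-- A slow scale infinitesimal net of positive reals. -/
def SlowInfPos (r : ℝ → ℝ) : Prop :=
  (∀ ε : ℝ, 0 < ε → ε ≤ 1 → 0 < r ε) ∧
    ∀ a : ℝ, 0 < a → SmallE fun ε => ε ^ a ≤ r ε ∧ r ε ≤ a

/-- A fast scale net. -/
def FastScale {V : Type*} [NormedAddCommGroup V] (x : ℝ → V) : Prop :=
  ∃ a : ℝ, 0 < a ∧ SmallE fun ε => ε ^ (-a) ≤ ‖x ε‖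

/-- A slow scale net. -/
def SlowScale {V : Type*} [NormedAddCommGroup V] (x : ℝ → V) : Prop :=
  ∀ a : ℝ, 0 < a → SmallE fun ε => ‖x ε‖ ≤ ε ^ (-a)

/-- A slow scale net of positive reals. -/
def SlowScalePos (R : ℝ → ℝ) : Prop :=
  (∀ ε : ℝ, 0 < ε → ε ≤ 1 → 0 < R ε) ∧
    ∀ a : ℝ, 0 < a → SmallE fun ε => R ε ≤ ε ^ (-a)

/-- First order partial derivative in the `i`-th coordinate direction. -/
def pd {d : ℕ} {F : Type*} [NormedAddCommGroup F] [NormedSpace ℝ F]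
    (i : Fin d) (f : Eu d → F) : Eu d → F :=
  fun x => fderiv ℝ f x (EuclideanSpace.single i 1)

/-- Iterated partial derivative `∂^α` along a list of coordinate directions
(a multi-index `α`). -/
def pdL {d : ℕ} {F : Type*} [NormedAddCommGroup F] [NormedSpace ℝ F]
    (L : List (Fin d)) (f : Eu d → F) : Eu d → F :=
  L.foldr pd f

/-- A moderate net of smooth functions on an open set `Ω`. -/
def SmoothModNetOn {d : ℕ} (Ω : Set (Eu d)) (u : ℝ → Eu d → ℂ) : Prop :=
  (∀ ε : ℝ, 0 < ε → ε ≤ 1 → ContDiffOn ℝ (⊤ : ℕ∞) (u ε) Ω) ∧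
    ∀ K : Set (Eu d), IsCompact K → K ⊆ Ω → ∀ L : List (Fin d), ∃ N : ℕ,
      SmallE fun ε => ∀ x ∈ K, ‖pdL L (u ε) x‖ ≤ ε ^ (-(N : ℝ))

/-- A moderate net of smooth functions with supports all contained in one
common compact subset of `Ω`. -/
def CptModNet {d : ℕ} (Ω : Set (Eu d)) (v : ℝ → Eu d → ℂ) : Prop :=
  (∀ ε : ℝ, 0 < ε → ε ≤ 1 → ContDiff ℝ (⊤ : ℕ∞) (v ε)) ∧
  (∃ K : Set (Eu d), IsCompact K ∧ K ⊆ Ω ∧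
    ∀ ε : ℝ, 0 < ε → ε ≤ 1 → tsupport (v ε) ⊆ K) ∧
  (∀ L : List (Fin d), ∃ N : ℕ, SmallE fun ε =>
    ∀ x : Eu d, ‖pdL L (v ε) x‖ ≤ ε ^ (-(N : ℝ)))

/-- The Fourier transform `∫ e^{-i x·ξ} w(x) dx`. -/
def FT {d : ℕ} (w : Eu d → ℂ) (ξ : Eu d) : ℂ :=
  ∫ x : Eu d, Complex.exp (-(Complex.I * ((⟪x, ξ⟫ : ℝ) : ℂ))) * w x

/-- The net `(u_ε)` is microlocally regular at the generalized point `(x₀, ξ₀)`. -/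
def MicroReg {d : ℕ} (Ω : Set (Eu d)) (u : ℝ → Eu d → ℂ) (x₀ ξ₀ : ℝ → Eu d) : Prop :=
  ∃ v : ℝ → Eu d → ℂ, CptModNet Ω v ∧
    (∀ m : ℕ, 1 ≤ m → SmallE fun ε => ∀ x : Eu d,
      ‖x - x₀ ε‖ ≤ ε ^ (1 / (m : ℝ)) → ‖u ε x - v ε x‖ ≤ ε ^ (m : ℝ)) ∧
    (∀ m : ℕ, 1 ≤ m → SmallE fun ε => ∀ ξ : Eu d,
      ε ^ (-(1 / (m : ℝ))) ≤ ‖ξ‖ → ‖‖ξ‖⁻¹ • ξ - ξ₀ ε‖ ≤ ε ^ (1 / (m : ℝ)) →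
        ‖FT (v ε) ξ‖ ≤ ε ^ (m : ℝ))

/-- The "japanese bracket" `⟨ξ⟩ = (1+|ξ|²)^{1/2}`. -/
def jap {d : ℕ} (ξ : Eu d) : ℝ := Real.sqrt (1 + ‖ξ‖ ^ 2)

/-- An S-moderate net of Schwartz functions. -/
def SModNet {d : ℕ} (v : ℝ → SchwartzMap (Eu d) ℂ) : Prop :=
  ∀ (L : List (Fin d)) (β : Fin d → ℕ), ∃ N : ℕ, SmallE fun ε =>
    ∀ x : Eu d, |∏ j, (x j) ^ (β j)| * ‖pdL L (⇑(v ε)) x‖ ≤ ε ^ (-(N : ℝ))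

/-- an S-moderate net of Schwartz functions decays rapidly, with all
seminorm losses moderate, beyond a suitable radius `ε^{-N}`. -/
theorem stmt2 {d : ℕ} (w : ℝ → SchwartzMap (Eu d) ℂ) (hw : SModNet w) :
    ∀ n m : ℕ, ∃ N : ℕ, SmallE fun ε => ∀ ξ : Eu d,
      ε ^ (-(N : ℝ)) ≤ ‖ξ‖ → jap ξ ^ m * ‖w ε ξ‖ ≤ ε ^ (n : ℝ) := by
  intro n m
  rcases Nat.eq_zero_or_pos d with hd | hd
  · subst hd
    refine ⟨0, 1, one_pos, fun ε hε hε1 ξ hξ => ?_⟩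
    exfalso
    have h0 : ‖ξ‖ = 0 := by
      simp [EuclideanSpace.norm_eq]
    rw [h0] at hξ
    have := Real.rpow_pos_of_pos hε (-((0:ℕ) : ℝ))
    linarith
  · haveI : Nonempty (Fin d) := ⟨⟨0, hd⟩⟩
    choose N hN using fun i : Fin d =>
      hw [] (fun j => if j = i then m + 1 else 0)
    choose e he hH using hN
    set N' := Finset.univ.sup N with hN'
    set B : ℕ := N' + n + 1 with hB
    have hC : (0:ℝ) < (2^m * d^(m+1) : ℕ) := by positivity
    refine ⟨B, min ((2^m * d^(m+1) : ℕ) : ℝ)⁻¹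
      (min 1 (Finset.univ.inf' Finset.univ_nonempty e)), ?_, ?_⟩
    · refine lt_min (by positivity) (lt_min one_pos ?_)
      rw [Finset.lt_inf'_iff]
      exact fun i _ => he i
    intro ε hε hεle ξ hξ
    have hεC : ε ≤ ((2^m * d^(m+1) : ℕ) : ℝ)⁻¹ := le_trans hεle (min_le_left _ _)
    have hε1 : ε ≤ 1 := le_trans hεle (le_trans (min_le_right _ _) (min_le_left _ _))
    have hεe : ∀ i : Fin d, ε ≤ e i := fun i =>
      le_trans hεle (le_trans (min_le_right _ _)
        (le_trans (min_le_right _ _) (Finset.inf'_le _ (Finset.mem_univ i))))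
    -- choose maximal coordinate
    obtain ⟨i, -, hi⟩ := Finset.exists_max_image Finset.univ (fun j => |ξ j|) Finset.univ_nonempty
    -- basic facts
    have hr0 : (0:ℝ) ≤ ‖ξ‖ := norm_nonneg _
    have hA0 : (0:ℝ) ≤ ‖w ε ξ‖ := norm_nonneg _
    have hεB : (0:ℝ) < ε ^ ((B:ℝ)) := Real.rpow_pos_of_pos hε _
    have hξ1 : 1 ≤ ‖ξ‖ := by
      refine le_trans ?_ hξ
      rw [Real.rpow_neg hε.le]
      exact (one_le_inv₀ (Real.rpow_pos_of_pos hε _)).2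
        (Real.rpow_le_one hε.le hε1 (by positivity))
    have hεBr : 1 ≤ ε ^ ((B:ℝ)) * ‖ξ‖ := by
      have h1 : ε ^ (-(B:ℝ)) * (ε ^ ((B:ℝ)) * ‖ξ‖) = ‖ξ‖ := by
        rw [← mul_assoc, ← Real.rpow_add hε]
        simp
      have := mul_le_mul_of_nonneg_left hξ hεB.le
      calc (1:ℝ) = ε ^ ((B:ℝ)) * ε ^ (-(B:ℝ)) := by
            rw [← Real.rpow_add hε]; simp
        _ ≤ ε ^ ((B:ℝ)) * ‖ξ‖ := by
            exact mul_le_mul_of_nonneg_left hξ hεB.le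
    -- norm bounded by max coordinate
    have hrt : ‖ξ‖ ≤ (d:ℝ) * |ξ i| := by
      have hsq : ‖ξ‖ ^ 2 ≤ (d:ℝ) * |ξ i| ^ 2 := by
        rw [EuclideanSpace.norm_eq, Real.sq_sqrt (by positivity)]
        calc (∑ j, ‖ξ j‖ ^ 2) ≤ ∑ _j : Fin d, |ξ i| ^ 2 := by
              refine Finset.sum_le_sum fun j _ => ?_
              rw [Real.norm_eq_abs]
              exact pow_le_pow_left₀ (abs_nonneg _) (hi j (Finset.mem_univ j)) 2
          _ = (d:ℝ) * |ξ i| ^ 2 := by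
              rw [Finset.sum_const, Finset.card_univ, Fintype.card_fin, nsmul_eq_mul]
      have hd1 : (1:ℝ) ≤ (d:ℝ) := by exact_mod_cast hd
      have hsq2 : ‖ξ‖ ^ 2 ≤ ((d:ℝ) * |ξ i|) ^ 2 := by nlinarith [sq_nonneg (|ξ i|)]
      calc ‖ξ‖ = Real.sqrt (‖ξ‖ ^ 2) := (Real.sqrt_sq hr0).symm
        _ ≤ Real.sqrt (((d:ℝ) * |ξ i|) ^ 2) := Real.sqrt_le_sqrt hsq2
        _ = (d:ℝ) * |ξ i| := Real.sqrt_sq (by positivity)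
    -- the S-moderate bound at i, weakened to exponent N'
    have hmod : |ξ i| ^ (m+1) * ‖w ε ξ‖ ≤ ε ^ (-(N':ℝ)) := by
      have h1 := hH i ε hε (hεe i) ξ
      have h2 : (∏ j, (ξ j) ^ (if j = i then m + 1 else 0)) = (ξ i) ^ (m+1) := by
        have hj : ∀ j : Fin d, (ξ j) ^ (if j = i then m + 1 else 0)
            = if j = i then (ξ i) ^ (m+1) else 1 := by
          intro j; by_cases h : j = i
          · subst h; simp
          · simp [h]
        simp only [hj, Finset.prod_ite_eq' Finset.univ i fun _ => (ξ i) ^ (m+1),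
          Finset.mem_univ, if_true]
      rw [h2, abs_pow] at h1
      refine le_trans h1 (Real.rpow_le_rpow_of_exponent_ge hε hε1 ?_)
      have : N i ≤ N' := Finset.le_sup (Finset.mem_univ i)
      simp only [neg_le_neg_iff]
      exact_mod_cast this
    -- jap bound
    have hjap : jap ξ ≤ 2 * ‖ξ‖ := by
      have : (1:ℝ) + ‖ξ‖ ^ 2 ≤ (2 * ‖ξ‖) ^ 2 := by nlinarith
      calc jap ξ = Real.sqrt (1 + ‖ξ‖ ^ 2) := rfl
        _ ≤ Real.sqrt ((2 * ‖ξ‖) ^ 2) := Real.sqrt_le_sqrt this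
        _ = 2 * ‖ξ‖ := Real.sqrt_sq (by positivity)
    have hjap0 : 0 ≤ jap ξ := Real.sqrt_nonneg _
    -- main chain
    have key : jap ξ ^ m * ‖w ε ξ‖ ≤ ((2^m * d^(m+1) : ℕ) : ℝ) * (ε ^ ((B:ℝ)) * ε ^ (-(N':ℝ))) := by
      calc jap ξ ^ m * ‖w ε ξ‖ ≤ (2 * ‖ξ‖) ^ m * ‖w ε ξ‖ := by
            exact mul_le_mul_of_nonneg_right (pow_le_pow_left₀ hjap0 hjap m) hA0
        _ = 2 ^ m * (‖ξ‖ ^ m * ‖w ε ξ‖) := by ring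
        _ ≤ 2 ^ m * ((ε ^ ((B:ℝ)) * ‖ξ‖) * (‖ξ‖ ^ m * ‖w ε ξ‖)) := by
            refine mul_le_mul_of_nonneg_left ?_ (by positivity)
            nlinarith [mul_nonneg (pow_nonneg hr0 m) hA0]
        _ = 2 ^ m * ε ^ ((B:ℝ)) * (‖ξ‖ ^ (m+1) * ‖w ε ξ‖) := by ring
        _ ≤ 2 ^ m * ε ^ ((B:ℝ)) * (((d:ℝ) * |ξ i|) ^ (m+1) * ‖w ε ξ‖) := by
            refine mul_le_mul_of_nonneg_left (mul_le_mul_of_nonneg_right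
              (pow_le_pow_left₀ hr0 hrt (m+1)) hA0) (by positivity)
        _ = (2 ^ m * (d:ℝ) ^ (m+1)) * ε ^ ((B:ℝ)) * (|ξ i| ^ (m+1) * ‖w ε ξ‖) := by ring
        _ ≤ (2 ^ m * (d:ℝ) ^ (m+1)) * ε ^ ((B:ℝ)) * ε ^ (-(N':ℝ)) := by
            refine mul_le_mul_of_nonneg_left hmod (by positivity)
        _ = ((2^m * d^(m+1) : ℕ) : ℝ) * (ε ^ ((B:ℝ)) * ε ^ (-(N':ℝ))) := by
            push_cast; ring
    have hpow : ε ^ ((B:ℝ)) * ε ^ (-(N':ℝ)) = ε * ε ^ ((n:ℝ)) := by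
      rw [← Real.rpow_add hε]
      have hBe : (B:ℝ) + -(N':ℝ) = 1 + (n:ℝ) := by
        rw [hB]; push_cast; ring
      rw [hBe, Real.rpow_add hε, Real.rpow_one]
    rw [hpow] at key
    refine le_trans key ?_
    have hεn : 0 ≤ ε ^ ((n:ℝ)) := (Real.rpow_pos_of_pos hε _).le
    have h1 : ((2^m * d^(m+1) : ℕ) : ℝ) * ε ≤ 1 := by
      calc ((2^m * d^(m+1) : ℕ) : ℝ) * ε
          ≤ ((2^m * d^(m+1) : ℕ) : ℝ) * ((2^m * d^(m+1) : ℕ) : ℝ)⁻¹ :=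
            mul_le_mul_of_nonneg_left hεC hC.le
        _ = 1 := mul_inv_cancel₀ hC.ne'
    calc ((2^m * d^(m+1) : ℕ) : ℝ) * (ε * ε ^ ((n:ℝ)))
        = (((2^m * d^(m+1) : ℕ) : ℝ) * ε) * ε ^ ((n:ℝ)) := by ring
      _ ≤ 1 * ε ^ ((n:ℝ)) := mul_le_mul_of_nonneg_right h1 hεn
      _ = ε ^ ((n:ℝ)) := one_mul _
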